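/- arXiv:2602.00183 — 2 statements merged into one kernel-verified Lean document; each statement's English description precedes it below -/
import Mathlib

section
/- Let s₀, s₁, …, s_n be independent, identically distributed real-valued random variables whose common distribution is atomless. Let α ∈ (0,1), set k = ⌈α(n+1)⌉, assume 1 ≤ k ≤ n, and let q̂ be the k-th smallest value among s₁, …, s_n. Then the false positive rate satisfies ℙ(s₀ ≤ q̂) = ⌈α(n+1)⌉/(n+1) ≤ α + 1/(n+1). -/
open MeasureTheory ProbabilityTheory
open Finset ENNReal

/-- The `k`-th smallest value among `s 0, …, s (n-1)` (the `k`-th order statistic of `s`),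
defined as `inf {q : #{i : s i ≤ q} ≥ k}`. -/
noncomputable def orderStat {n : ℕ} (s : Fin n → ℝ) (k : ℕ) : ℝ :=
  sInf {q : ℝ | k ≤ (Finset.univ.filter fun i => s i ≤ q).card}



lemma orderStat_le_iff {n k : ℕ} (hk1 : 1 ≤ k) (hkn : k ≤ n) (s : Fin n → ℝ) (r : ℝ) :
    r ≤ orderStat s k ↔ (Finset.univ.filter fun i => s i < r).card < k := by
  classical
  have hn : 0 < n := lt_of_lt_of_le hk1 hkn
  have hne' : Nonempty (Fin n) := ⟨⟨0, hn⟩⟩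
  set S := {q : ℝ | k ≤ (Finset.univ.filter fun i => s i ≤ q).card} with hS
  have himg : (Finset.univ.image s).Nonempty := by simp [Finset.univ_nonempty]
  have hne : S.Nonempty := by
    refine ⟨(Finset.univ.image s).max' himg, ?_⟩
    have h1 : (Finset.univ.filter fun i => s i ≤ (Finset.univ.image s).max' himg)
        = Finset.univ := by
      ext i
      simp [Finset.le_max' _ _ (Finset.mem_image_of_mem s (Finset.mem_univ i))]
    simp only [hS, Set.mem_setOf_eq, h1, Finset.card_univ, Fintype.card_fin]
    exact hkn
  have hbdd : BddBelow S := by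
    refine ⟨(Finset.univ.image s).min' himg, fun q hq => ?_⟩
    obtain ⟨i, hi⟩ : ∃ i, s i ≤ q := by
      have h2 : (Finset.univ.filter fun i => s i ≤ q).Nonempty :=
        Finset.card_pos.mp (lt_of_lt_of_le hk1 hq)
      obtain ⟨i, hi⟩ := h2
      exact ⟨i, (Finset.mem_filter.mp hi).2⟩
    exact le_trans (Finset.min'_le _ _ (Finset.mem_image_of_mem s (Finset.mem_univ i))) hi
  constructor
  · intro hr
    by_contra h
    push_neg at h
    set F := Finset.univ.filter fun i => s i < r with hF
    have hFne : F.Nonempty := Finset.card_pos.mp (lt_of_lt_of_le hk1 h)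
    have hFim : (F.image s).Nonempty := hFne.image s
    set q := (F.image s).max' hFim with hq
    obtain ⟨i₀, hi₀F, hi₀⟩ := Finset.mem_image.mp ((F.image s).max'_mem hFim)
    have hqr : q < r := by
      rw [hq, ← hi₀]
      exact (Finset.mem_filter.mp hi₀F).2
    have hsub : F ⊆ Finset.univ.filter fun i => s i ≤ q := by
      intro i hi
      exact Finset.mem_filter.mpr ⟨Finset.mem_univ i,
        Finset.le_max' _ _ (Finset.mem_image_of_mem s hi)⟩
    have hqS : q ∈ S := le_trans h (Finset.card_le_card hsub)
    exact absurd (lt_of_le_of_lt (hr.trans (csInf_le hbdd hqS)) hqr) (lt_irrefl r)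
  · intro h
    refine le_csInf hne fun q hq => ?_
    by_contra hq'
    push_neg at hq'
    have hsub : (Finset.univ.filter fun i => s i ≤ q) ⊆ Finset.univ.filter fun i => s i < r := by
      intro i hi
      exact Finset.mem_filter.mpr ⟨Finset.mem_univ i,
        lt_of_le_of_lt (Finset.mem_filter.mp hi).2 hq'⟩
    exact absurd (lt_of_le_of_lt (hq.trans (Finset.card_le_card hsub)) h) (lt_irrefl k)

lemma card_filter_equiv {α β : Type*} [Fintype α] [Fintype β] (e : α ≃ β)
    (p : β → Prop) [DecidablePred p] :
    (Finset.univ.filter fun a => p (e a)).card = (Finset.univ.filter p).card := by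
  rw [← Fintype.card_subtype, ← Fintype.card_subtype]
  exact Fintype.card_congr (e.subtypeEquiv fun a => Iff.rfl)

lemma card_filter_comp_inj {n : ℕ} (f : Fin n → Fin (n + 1)) (hfinj : Function.Injective f)
    (j : Fin (n + 1)) (hfj : ∀ i, f i ≠ j) (p : Fin (n + 1) → Prop) [DecidablePred p] :
    (Finset.univ.filter fun i => p (f i)).card
      = (Finset.univ.filter fun i => p i ∧ i ≠ j).card := by
  classical
  have himg : Finset.univ.image f = Finset.univ.erase j := by
    apply Finset.eq_of_subset_of_card_le
    · intro b hb
      obtain ⟨a, _, rfl⟩ := Finset.mem_image.mp hb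
      exact Finset.mem_erase.mpr ⟨hfj a, Finset.mem_univ _⟩
    · rw [Finset.card_erase_of_mem (Finset.mem_univ j),
        Finset.card_image_of_injective _ hfinj]
      simp
  apply Finset.card_bij (fun i _ => f i)
  · intro a ha
    simp only [Finset.mem_filter, Finset.mem_univ, true_and] at ha ⊢
    exact ⟨ha, hfj a⟩
  · intro a _ b _ hab
    exact hfinj hab
  · intro b hb
    simp only [Finset.mem_filter, Finset.mem_univ, true_and] at hb
    have : b ∈ Finset.univ.image f := by
      rw [himg]; exact Finset.mem_erase.mpr ⟨hb.2, Finset.mem_univ _⟩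
    obtain ⟨a, _, rfl⟩ := Finset.mem_image.mp this
    exact ⟨a, Finset.mem_filter.mpr ⟨Finset.mem_univ _, hb.1⟩, rfl⟩

lemma card_fin_lt {N k : ℕ} (hk : k ≤ N) :
    (Finset.univ.filter fun m : Fin N => (m : ℕ) < k).card = k := by
  have h : Fintype.card {m : Fin N // (m : ℕ) < k} = Fintype.card (Fin k) :=
    Fintype.card_congr
      ⟨fun m => ⟨m.1.1, m.2⟩, fun a => ⟨⟨a.1, lt_of_lt_of_le a.2 hk⟩, a.2⟩,
        fun m => by ext; rfl, fun a => by ext; rfl⟩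
  rw [← Fintype.card_subtype, h, Fintype.card_fin]

lemma rank_count {n k : ℕ} (hk : k ≤ n + 1) (x : Fin (n + 1) → ℝ)
    (hx : Function.Injective x) :
    (Finset.univ.filter fun j : Fin (n + 1) =>
      (Finset.univ.filter fun i => x i < x j).card < k).card = k := by
  classical
  set R : Fin (n + 1) → ℕ := fun j => (Finset.univ.filter fun i => x i < x j).card with hR
  have hRlt : ∀ j, R j < n + 1 := by
    intro j
    have hsub : (Finset.univ.filter fun i => x i < x j) ⊆ Finset.univ.erase j := by
      intro i hi
      refine Finset.mem_erase.mpr ⟨?_, Finset.mem_univ _⟩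
      rintro rfl
      exact absurd (Finset.mem_filter.mp hi).2 (lt_irrefl _)
    calc R j ≤ (Finset.univ.erase j).card := Finset.card_le_card hsub
      _ = n := by rw [Finset.card_erase_of_mem (Finset.mem_univ j)]; simp
      _ < n + 1 := Nat.lt_succ_self n
  have hmono : ∀ {j j' : Fin (n + 1)}, x j < x j' → R j < R j' := by
    intro j j' hlt
    apply Finset.card_lt_card
    constructor
    · intro i hi
      exact Finset.mem_filter.mpr ⟨Finset.mem_univ _,
        lt_trans (Finset.mem_filter.mp hi).2 hlt⟩
    · intro hcon
      have hjmem : j ∈ Finset.univ.filter fun i => x i < x j' :=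
        Finset.mem_filter.mpr ⟨Finset.mem_univ _, hlt⟩
      exact absurd (Finset.mem_filter.mp (hcon hjmem)).2 (lt_irrefl _)
  set ρ : Fin (n + 1) → Fin (n + 1) := fun j => ⟨R j, hRlt j⟩ with hρ
  have hinj : Function.Injective ρ := by
    intro j j' h
    by_contra hne
    rcases lt_trichotomy (x j) (x j') with h1 | h1 | h1
    · exact absurd (Fin.mk.injEq .. ▸ h) (Nat.ne_of_lt (hmono h1)) 
    · exact hne (hx h1)
    · exact absurd (Fin.mk.injEq .. ▸ h) (Nat.ne_of_gt (hmono h1))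
  have hbij := Finite.injective_iff_bijective.mp hinj
  let e := Equiv.ofBijective ρ hbij
  have : (Finset.univ.filter fun j : Fin (n + 1) => R j < k).card
      = (Finset.univ.filter fun m : Fin (n + 1) => (m : ℕ) < k).card := by
    have := card_filter_equiv e (fun m : Fin (n + 1) => (m : ℕ) < k)
    simpa [e, hρ] using this
  rw [hR] at this
  rw [this, card_fin_lt hk]

lemma mem_A_iff {n k : ℕ} (hk1 : 1 ≤ k) (hkn : k ≤ n) (x : Fin (n + 1) → ℝ) (j : Fin (n + 1)) :
    (x j ≤ orderStat (fun i : Fin n => x (j.succAbove i)) k ↔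
      (Finset.univ.filter fun i => x i < x j).card < k) := by
  classical
  rw [orderStat_le_iff hk1 hkn]
  rw [card_filter_comp_inj j.succAbove (Fin.succAbove_right_injective)
      j (fun i => Fin.succAbove_ne j i) (fun i => x i < x j)]
  have heq : (Finset.univ.filter fun i : Fin (n+1) => x i < x j ∧ i ≠ j)
      = Finset.univ.filter fun i => x i < x j := by
    apply Finset.filter_congr
    intro i _
    constructor
    · exact fun h => h.1
    · intro h
      refine ⟨h, ?_⟩
      rintro rfl
      exact absurd h (lt_irrefl _)
  rw [heq]

/-- **Theorem 5.4 (false positive rate bound).**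
For i.i.d. scores `t 0, …, t n` with atomless common law, with `k = ⌈α(n+1)⌉`,
`1 ≤ k ≤ n`, and `q̂` the `k`-th smallest calibration score among `t 1, …, t n`,
the false positive rate satisfies
`ℙ(t 0 ≤ q̂) = ⌈α(n+1)⌉/(n+1) ≤ α + 1/(n+1)`. -/
theorem conformal_fpr_bound {Ω : Type*} [MeasurableSpace Ω]
    (μ : Measure Ω) [IsProbabilityMeasure μ]
    (n : ℕ) (t : Fin (n + 1) → Ω → ℝ)
    (hmeas : ∀ i, Measurable (t i))
    (hindep : iIndepFun t μ)
    (hident : ∀ i, IdentDistrib (t i) (t 0) μ μ)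
    (hatomless : ∀ r : ℝ, (μ.map (t 0)) {r} = 0)
    (α : ℝ) (hα : α ∈ Set.Ioo (0 : ℝ) 1)
    (k : ℕ) (hk : (k : ℤ) = ⌈α * ((n : ℝ) + 1)⌉) (hk1 : 1 ≤ k) (hkn : k ≤ n) :
    (μ {ω | t 0 ω ≤ orderStat (fun i : Fin n => t i.succ ω) k}).toReal
        = (k : ℝ) / ((n : ℝ) + 1) ∧
    (k : ℝ) / ((n : ℝ) + 1) ≤ α + 1 / ((n : ℝ) + 1) := by
  classical
  set ν := μ.map (t 0) with hν
  have hνprob : IsProbabilityMeasure ν := Measure.isProbabilityMeasure_map (hmeas 0).aemeasurable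
  set T : Ω → (Fin (n + 1) → ℝ) := fun ω i => t i ω with hTdef
  have hT : Measurable T := measurable_pi_lambda _ fun i => hmeas i
  set π : Measure (Fin (n + 1) → ℝ) := Measure.pi (fun _ : Fin (n + 1) => ν) with hπ
  -- individual laws
  have hlaw : ∀ i, ∀ s : Set ℝ, MeasurableSet s → μ (t i ⁻¹' s) = ν s := by
    intro i s hs
    rw [hν, ← (hident i).map_eq, Measure.map_apply (hmeas i) hs]
  -- joint law is the product measure
  have hmap : μ.map T = π := by
    refine (Measure.pi_eq fun s hs => ?_).symm
    rw [Measure.map_apply hT (MeasurableSet.univ_pi hs)]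
    have hpre : T ⁻¹' Set.pi Set.univ s = ⋂ i, t i ⁻¹' s i := by
      ext ω
      simp [hTdef, Set.mem_pi]
    rw [hpre]
    have h1 := hindep.measure_inter_preimage_eq_mul (S := Finset.univ)
      (sets := s) (fun i _ => hs i)
    have h2 : (⋂ i, t i ⁻¹' s i) = ⋂ i ∈ Finset.univ, t i ⁻¹' s i := by simp
    rw [h2, h1]
    exact Finset.prod_congr rfl fun i _ => hlaw i (s i) (hs i)
  -- pairwise distinctness a.s.
  have hpair : ∀ i j : Fin (n + 1), i ≠ j → μ {ω | t i ω = t j ω} = 0 := by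
    intro i j hij
    have hI : IndepFun (t i) (t j) μ := hindep.indepFun hij
    have hprod := (indepFun_iff_map_prod_eq_prod_map_map
      (hmeas i).aemeasurable (hmeas j).aemeasurable).mp hI
    have hdiag : MeasurableSet {p : ℝ × ℝ | p.1 = p.2} :=
      measurableSet_eq_fun measurable_fst measurable_snd
    have h1 : {ω | t i ω = t j ω} = (fun ω => (t i ω, t j ω)) ⁻¹' {p : ℝ × ℝ | p.1 = p.2} := rfl
    rw [h1, ← Measure.map_apply ((hmeas i).prodMk (hmeas j)) hdiag, hprod,
      (hident i).map_eq, (hident j).map_eq, ← hν, Measure.prod_apply hdiag]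
    have h2 : ∀ a : ℝ, (Prod.mk a ⁻¹' {p : ℝ × ℝ | p.1 = p.2}) = {a} := by
      intro a; ext b; simp [eq_comm]
    simp only [h2, hatomless]
    simp
  have hnull : π {x : Fin (n + 1) → ℝ | ¬ Function.Injective x} = 0 := by
    have hsub : {x : Fin (n + 1) → ℝ | ¬ Function.Injective x} ⊆
        ⋃ (i : Fin (n + 1)) (j : Fin (n + 1)) (_ : i ≠ j), {x | x i = x j} := by
      intro x hx
      simp only [Function.Injective, not_forall, Set.mem_setOf_eq] at hx
      obtain ⟨i, j, hxij, hij⟩ := hx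
      exact Set.mem_iUnion.mpr ⟨i, Set.mem_iUnion.mpr ⟨j, Set.mem_iUnion.mpr ⟨hij, hxij⟩⟩⟩
    apply measure_mono_null hsub
    refine measure_iUnion_null fun i => measure_iUnion_null fun j =>
      measure_iUnion_null fun hij => ?_
    have hms : MeasurableSet {x : Fin (n + 1) → ℝ | x i = x j} :=
      measurableSet_eq_fun (measurable_pi_apply i) (measurable_pi_apply j)
    rw [← hmap, Measure.map_apply hT hms]
    exact hpair i j hij
  -- the events
  set B : Fin (n + 1) → Set (Fin (n + 1) → ℝ) :=
    fun j => {x | (Finset.univ.filter fun i => x i < x j).card < k} with hB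
  have hBmeas : ∀ j, MeasurableSet (B j) := by
    intro j
    have hm : Measurable fun x : Fin (n + 1) → ℝ =>
        (Finset.univ.filter fun i => x i < x j).card := by
      have heqf : (fun x : Fin (n + 1) → ℝ => (Finset.univ.filter fun i => x i < x j).card)
          = fun x => ∑ i : Fin (n + 1), if x i < x j then 1 else 0 := by
        funext x
        rw [Finset.card_filter]
      rw [heqf]
      exact Finset.measurable_sum _ fun i _ => Measurable.ite
        (measurableSet_lt (measurable_pi_apply i) (measurable_pi_apply j))
        measurable_const measurable_const
    have hBj : B j = (fun x : Fin (n + 1) → ℝ =>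
        (Finset.univ.filter fun i => x i < x j).card) ⁻¹' {m : ℕ | m < k} := rfl
    rw [hBj]
    exact hm MeasurableSet.of_discrete
  -- symmetry
  have hsym : ∀ j, π (B j) = π (B 0) := by
    intro j
    set f : Fin (n + 1) ≃ Fin (n + 1) := Equiv.swap 0 j with hf
    have hmp := measurePreserving_piCongrLeft (fun _ : Fin (n + 1) => ν) f
    have hpre : (MeasurableEquiv.piCongrLeft (fun _ : Fin (n + 1) => ℝ) f) ⁻¹' (B 0) = B j := by
      ext x
      have happ : ∀ i, (MeasurableEquiv.piCongrLeft (fun _ : Fin (n + 1) => ℝ) f) x i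
          = x (f.symm i) := by
        intro i
        have h3 := Equiv.piCongrLeft_apply_apply (fun _ : Fin (n + 1) => ℝ) f x (f.symm i)
        rw [Equiv.apply_symm_apply] at h3
        exact h3
      simp only [Set.mem_preimage, hB, Set.mem_setOf_eq, happ]
      have hf0 : f.symm 0 = j := by
        rw [hf, Equiv.symm_swap, Equiv.swap_apply_left]
      rw [hf0]
      have hcount := card_filter_equiv f.symm (fun i => x i < x j)
      rw [hcount]
    rw [← hpre]
    exact hmp.measure_preimage (hBmeas 0).nullMeasurableSet
  -- the counting identity gives the total mass
  have hsum : ∑ j : Fin (n + 1), π (B j) = (k : ℝ≥0∞) := by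
    have h4 : ∀ j, π (B j) = ∫⁻ x, Set.indicator (B j) (fun _ => (1 : ℝ≥0∞)) x ∂π :=
      fun j => (lintegral_indicator_one (hBmeas j)).symm
    calc ∑ j : Fin (n + 1), π (B j)
        = ∑ j : Fin (n + 1), ∫⁻ x, Set.indicator (B j) (fun _ => (1 : ℝ≥0∞)) x ∂π := by
          exact Finset.sum_congr rfl fun j _ => h4 j
      _ = ∫⁻ x, ∑ j : Fin (n + 1), Set.indicator (B j) (fun _ => (1 : ℝ≥0∞)) x ∂π :=
          (lintegral_finset_sum _ fun j _ => measurable_one.indicator (hBmeas j)).symm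
      _ = ∫⁻ _, (k : ℝ≥0∞) ∂π := by
          refine lintegral_congr_ae ?_
          have hae : ∀ᵐ x ∂π, Function.Injective x := ae_iff.mpr hnull
          filter_upwards [hae] with x hx
          have h5 : ∀ j, Set.indicator (B j) (fun _ => (1 : ℝ≥0∞)) x
              = if (Finset.univ.filter fun i => x i < x j).card < k then 1 else 0 := by
            intro j
            rw [Set.indicator_apply]
            rfl
          simp only [h5]
          rw [Finset.sum_boole]
          rw [rank_count (le_trans hkn (Nat.le_succ n)) x hx]
      _ = (k : ℝ≥0∞) := by simp
  have hnz : ((n : ℝ≥0∞) + 1) ≠ 0 := by simp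
  have hnt : ((n : ℝ≥0∞) + 1) ≠ ⊤ := by simp
  have hB0 : π (B 0) = (k : ℝ≥0∞) / ((n : ℝ≥0∞) + 1) := by
    have h6 : ∑ j : Fin (n + 1), π (B j) = ((n : ℝ≥0∞) + 1) * π (B 0) := by
      rw [Finset.sum_congr rfl fun j _ => hsym j, Finset.sum_const, Finset.card_univ,
        Fintype.card_fin, nsmul_eq_mul]
      push_cast
      ring
    rw [(ENNReal.eq_div_iff hnz hnt : π (B 0) = (k : ℝ≥0∞) / ((n : ℝ≥0∞) + 1) ↔ _)]
    rw [← h6, hsum]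
  -- identify the event
  have hevent : {ω | t 0 ω ≤ orderStat (fun i : Fin n => t i.succ ω) k} = T ⁻¹' (B 0) := by
    ext ω
    simp only [Set.mem_setOf_eq, Set.mem_preimage, hB]
    have h0 : (fun i : Fin n => t i.succ ω) = fun i => (T ω) ((0 : Fin (n + 1)).succAbove i) := by
      funext i
      simp [hTdef, Fin.succAbove_zero]
    rw [h0]
    exact mem_A_iff hk1 hkn (T ω) 0
  have hμE : μ {ω | t 0 ω ≤ orderStat (fun i : Fin n => t i.succ ω) k}
      = (k : ℝ≥0∞) / ((n : ℝ≥0∞) + 1) := by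
    rw [hevent, ← Measure.map_apply hT (hBmeas 0), hmap, hB0]
  constructor
  · rw [hμE, ENNReal.toReal_div]
    norm_num [ENNReal.toReal_add]
  · have hceil : ((⌈α * ((n : ℝ) + 1)⌉ : ℤ) : ℝ) < α * ((n : ℝ) + 1) + 1 :=
      Int.ceil_lt_add_one _
    have hkR : (k : ℝ) ≤ α * ((n : ℝ) + 1) + 1 := by
      have : ((k : ℤ) : ℝ) = ((⌈α * ((n : ℝ) + 1)⌉ : ℤ) : ℝ) := by exact_mod_cast hk
      push_cast at this
      linarith
    have hpos : (0 : ℝ) < (n : ℝ) + 1 := by positivity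
    rw [div_le_iff₀ hpos]
    have : (α + 1 / ((n : ℝ) + 1)) * ((n : ℝ) + 1) = α * ((n : ℝ) + 1) + 1 := by
      field_simp
    rw [this]
    exact hkR
end

section
/- Let σ > 0, let x, δ ∈ ℝ^d with δ ≠ 0, and let p̄ ∈ (0,1). Define the half-space A = {z ∈ ℝ^d : ⟨δ, z − x⟩ ≥ σ‖δ‖₂·Φ⁻¹(1 − p̄)}. If ε is a random vector with law ν_{0,σ}, then ℙ(x + δ + ε ∈ A) = Φ(Φ⁻¹(p̄) + ‖δ‖₂/σ). -/
open MeasureTheory ProbabilityTheory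

/-- Standard normal CDF. -/
noncomputable def Phi (t : ℝ) : ℝ := ((gaussianReal 0 1) (Set.Iic t)).toReal

/-- Inverse of the standard normal CDF on `(0,1)`. -/
noncomputable def PhiInv : ℝ → ℝ := Function.invFun Phi

/-- Gaussian measure on `ℝ^d` with mean `m` and covariance `σ² I`
(product of `d` one-dimensional Gaussians). -/
noncomputable def gaussianVec {d : ℕ} (m : EuclideanSpace ℝ (Fin d)) (σ : ℝ) :
    Measure (EuclideanSpace ℝ (Fin d)) :=
  (Measure.pi fun i => gaussianReal (m i) ((σ ^ 2).toNNReal)).map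
    (MeasurableEquiv.toLp 2 (Fin d → ℝ))

section Aux

open Set Filter
open scoped ENNReal NNReal

/-! ### One-dimensional facts about `Phi` -/

lemma Phi_eq_integral (t : ℝ) :
    Phi t = ∫ x in Set.Iic t, gaussianPDFReal 0 1 x := by
  rw [Phi, gaussianReal_apply_eq_integral 0 one_ne_zero,
    ENNReal.toReal_ofReal (integral_nonneg fun x => gaussianPDFReal_nonneg 0 1 x)]

lemma Phi_sub_Phi (s t : ℝ) :
    Phi t - Phi s = ∫ x in s..t, gaussianPDFReal 0 1 x := by
  rw [Phi_eq_integral, Phi_eq_integral]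
  exact intervalIntegral.integral_Iic_sub_Iic
    (integrable_gaussianPDFReal 0 1).integrableOn
    (integrable_gaussianPDFReal 0 1).integrableOn

lemma continuous_Phi : Continuous Phi := by
  have h : Phi = fun t => Phi 0 + ∫ x in (0:ℝ)..t, gaussianPDFReal 0 1 x := by
    funext t
    rw [← Phi_sub_Phi 0 t]; ring
  rw [h]
  exact continuous_const.add ((integrable_gaussianPDFReal 0 1).continuous_primitive 0)

lemma strictMono_Phi : StrictMono Phi := by
  intro s t hst
  have h := Phi_sub_Phi s t
  have pos : 0 < ∫ x in s..t, gaussianPDFReal 0 1 x :=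
    intervalIntegral.intervalIntegral_pos_of_pos
      (integrable_gaussianPDFReal 0 1).intervalIntegrable
      (fun x => gaussianPDFReal_pos 0 1 x one_ne_zero) hst
  linarith

lemma gaussianReal_map_neg :
    (gaussianReal 0 1).map (fun x => -x) = gaussianReal 0 1 := by
  have h := gaussianReal_map_const_mul (μ := 0) (v := 1) (-1)
  have h2 : NNReal.mk ((-1:ℝ)^2) (sq_nonneg _) * 1 = 1 := by
    ext; norm_num
  rw [h2] at h
  simp only [neg_one_mul, mul_zero] at h
  exact h

lemma gaussianReal_Ici_eq (a : ℝ) :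
    (gaussianReal 0 1) (Set.Ici a) = (gaussianReal 0 1) (Set.Iic (-a)) := by
  conv_lhs => rw [← _root_.gaussianReal_map_neg]
  rw [Measure.map_apply measurable_neg measurableSet_Ici]
  congr 1
  ext x
  simp [le_neg]

lemma Phi_Ici (a : ℝ) : ((gaussianReal 0 1) (Set.Ici a)).toReal = Phi (-a) := by
  rw [gaussianReal_Ici_eq]; rfl

lemma Phi_neg (a : ℝ) : Phi (-a) = 1 - Phi a := by
  have hsingleton : (gaussianReal 0 1) {a} = 0 :=
    (gaussianReal_absolutelyContinuous 0 one_ne_zero) (measure_singleton a)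
  have hIoi : (gaussianReal 0 1) (Set.Ioi a) = (gaussianReal 0 1) (Set.Ici a) :=
    measure_congr (Ioi_ae_eq_Ici' hsingleton)
  have hcompl : (gaussianReal 0 1) (Set.Ioi a) = 1 - (gaussianReal 0 1) (Set.Iic a) := by
    rw [← Set.compl_Iic, measure_compl measurableSet_Iic (measure_ne_top _ _), measure_univ]
  have hle : (gaussianReal 0 1) (Set.Iic a) ≤ 1 := prob_le_one
  have h1 : (gaussianReal 0 1) (Set.Iic (-a)) = 1 - (gaussianReal 0 1) (Set.Iic a) := by
    rw [← gaussianReal_Ici_eq, ← hIoi, hcompl]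
  rw [Phi, Phi, h1, ENNReal.toReal_sub_of_le hle ENNReal.one_ne_top, ENNReal.toReal_one]

lemma tendsto_Phi_atTop : Tendsto Phi atTop (nhds 1) := by
  have h := tendsto_measure_Iic_atTop (gaussianReal 0 1)
  rw [measure_univ] at h
  have := (ENNReal.tendsto_toReal ENNReal.one_ne_top).comp h
  exact this

lemma tendsto_Phi_atBot : Tendsto Phi atBot (nhds 0) := by
  have h : Tendsto (fun t => 1 - Phi (-t)) atBot (nhds 0) := by
    have hneg : Tendsto (fun t : ℝ => -t) atBot atTop := tendsto_neg_atBot_atTop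
    have h2 := tendsto_Phi_atTop.comp hneg
    have := Tendsto.sub (tendsto_const_nhds (x := (1:ℝ))) h2
    simpa using this
  refine h.congr (fun t => ?_)
  rw [Phi_neg]; ring

lemma Phi_PhiInv {p : ℝ} (hp : p ∈ Set.Ioo (0:ℝ) 1) : Phi (PhiInv p) = p := by
  have hex : ∃ t, Phi t = p := by
    obtain ⟨a, ha⟩ : ∃ a, Phi a < p :=
      (tendsto_Phi_atBot.eventually (eventually_lt_nhds hp.1)).exists
    obtain ⟨b, hb⟩ : ∃ b, p < Phi b :=
      (tendsto_Phi_atTop.eventually (eventually_gt_nhds hp.2)).exists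
    have hab : a ≤ b := by
      by_contra hab
      exact absurd (strictMono_Phi.monotone (le_of_not_ge hab)) (by linarith)
    obtain ⟨t, _, ht⟩ := intermediate_value_Icc hab continuous_Phi.continuousOn
      (Set.mem_Icc.2 ⟨ha.le, hb.le⟩)
    exact ⟨t, ht⟩
  exact Function.invFun_eq hex

lemma PhiInv_eq {p t : ℝ} (hp : p ∈ Set.Ioo (0:ℝ) 1) (ht : Phi t = p) : PhiInv p = t :=
  strictMono_Phi.injective (by rw [Phi_PhiInv hp, ht])

lemma PhiInv_one_sub {p : ℝ} (hp : p ∈ Set.Ioo (0:ℝ) 1) :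
    PhiInv (1 - p) = -PhiInv p := by
  have hp' : (1 - p) ∈ Set.Ioo (0:ℝ) 1 := ⟨by linarith [hp.2], by linarith [hp.1]⟩
  refine PhiInv_eq hp' ?_
  rw [Phi_neg, Phi_PhiInv hp]

/-! ### Products of measures with densities -/

lemma map_withDensity_equiv {α β : Type*} [MeasurableSpace α] [MeasurableSpace β]
    (e : α ≃ᵐ β) (μ : Measure α) {f : α → ℝ≥0∞} (hf : Measurable f) :
    (μ.withDensity f).map e = (μ.map e).withDensity (fun y => f (e.symm y)) := by
  ext s hs
  rw [Measure.map_apply e.measurable hs, withDensity_apply _ (e.measurable hs),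
    withDensity_apply _ hs,
    setLIntegral_map (f := fun y => f (e.symm y)) (g := ⇑e) hs (hf.comp e.symm.measurable)
      e.measurable]
  simp_rw [e.symm_apply_apply]

lemma withDensity_prod_withDensity {α β : Type*} [MeasurableSpace α] [MeasurableSpace β]
    (μ : Measure α) (ν : Measure β) [SigmaFinite μ] [SigmaFinite ν]
    {f : α → ℝ≥0∞} {g : β → ℝ≥0∞}
    (hf : Measurable f) (hg : Measurable g)
    [SigmaFinite (μ.withDensity f)] [SigmaFinite (ν.withDensity g)] :
    (μ.withDensity f).prod (ν.withDensity g)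
      = (μ.prod ν).withDensity (fun p => f p.1 * g p.2) := by
  refine Measure.prod_eq (μ := μ.withDensity f) (ν := ν.withDensity g) fun s t hs ht => ?_
  rw [withDensity_apply _ (hs.prod ht), ← Measure.prod_restrict,
    lintegral_prod_mul hf.aemeasurable hg.aemeasurable,
    withDensity_apply _ hs, withDensity_apply _ ht]

lemma pi_gaussian_eq (n : ℕ) (v : ℝ≥0) (hv : v ≠ 0) :
    Measure.pi (fun _ : Fin n => gaussianReal 0 v)
      = (Measure.pi fun _ : Fin n => (volume : Measure ℝ)).withDensity
          (fun x => ∏ i, gaussianPDF 0 v (x i)) := by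
  induction n with
  | zero =>
      have h1 : (fun x : Fin 0 → ℝ => ∏ i, gaussianPDF 0 v (x i)) = 1 := by
        funext x; simp
      rw [h1, withDensity_one, Measure.pi_of_empty, Measure.pi_of_empty]
  | succ n ih =>
      have hm1 : Measurable (gaussianPDF 0 v) := measurable_gaussianPDF 0 v
      have hm2 : Measurable (fun x : Fin n → ℝ => ∏ i, gaussianPDF 0 v (x i)) :=
        Finset.measurable_prod _ fun i _ => hm1.comp (measurable_pi_apply i)
      have hm3 : Measurable (fun p : ℝ × (Fin n → ℝ) =>
          gaussianPDF 0 v p.1 * ∏ i, gaussianPDF 0 v (p.2 i)) :=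
        (hm1.comp measurable_fst).mul (hm2.comp measurable_snd)
      set e := MeasurableEquiv.piFinSuccAbove (fun _ : Fin (n + 1) => ℝ) 0 with he
      have hmpG := MeasureTheory.measurePreserving_piFinSuccAbove
        (fun _ : Fin (n + 1) => gaussianReal 0 v) 0
      have hmpV := MeasureTheory.measurePreserving_piFinSuccAbove
        (fun _ : Fin (n + 1) => (volume : Measure ℝ)) 0
      have h1 : Measure.pi (fun _ : Fin (n + 1) => gaussianReal 0 v)
          = ((gaussianReal 0 v).prod (Measure.pi fun _ : Fin n => gaussianReal 0 v)).map
              e.symm := (hmpG.symm e).map_eq.symm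
      haveI hsf1 : SigmaFinite (volume.withDensity (gaussianPDF 0 v)) := by
        rw [← gaussianReal_of_var_ne_zero 0 hv]; infer_instance
      haveI hsf2 : SigmaFinite ((Measure.pi fun _ : Fin n => (volume : Measure ℝ)).withDensity
          (fun x => ∏ i, gaussianPDF 0 v (x i))) := by
        rw [← ih]; infer_instance
      rw [h1, ih, gaussianReal_of_var_ne_zero 0 hv,
        withDensity_prod_withDensity _ _ hm1 hm2,
        map_withDensity_equiv e.symm _ hm3,
        (hmpV.symm e).map_eq]
      congr 1
      funext z
      simp only [MeasurableEquiv.symm_symm]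
      have hz : e z = (z 0, fun i : Fin n => z ((0 : Fin (n+1)).succAbove i)) := rfl
      rw [hz]
      simp only [Fin.succAbove_zero]
      rw [Fin.prod_univ_succ]

/-! ### The Gaussian vector measure -/

variable {d : ℕ}

lemma prod_gaussianPDF_norm (v : ℝ≥0) (z : EuclideanSpace ℝ (Fin d)) :
    ∏ i, gaussianPDF 0 v (z i)
      = ENNReal.ofReal ((Real.sqrt (2 * Real.pi * v))⁻¹ ^ d
          * Real.exp (-‖z‖ ^ 2 / (2 * v))) := by
  simp only [gaussianPDF]
  rw [← ENNReal.ofReal_prod_of_nonneg (fun i _ => gaussianPDFReal_nonneg _ _ _)]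
  congr 1
  simp only [gaussianPDFReal, sub_zero]
  rw [Finset.prod_mul_distrib, Finset.prod_const, Finset.card_univ, Fintype.card_fin,
    ← Real.exp_sum]
  congr 1
  rw [← Finset.sum_div, EuclideanSpace.norm_eq, Real.sq_sqrt (by positivity)]
  simp [Real.norm_eq_abs, sq_abs]

lemma measurable_prod_gaussianPDF (v : ℝ≥0) :
    Measurable (fun z : EuclideanSpace ℝ (Fin d) => ∏ i, gaussianPDF 0 v (z i)) :=
  Finset.measurable_prod _ fun i _ => (measurable_gaussianPDF 0 v).comp
    ((measurable_pi_apply i).comp (MeasurableEquiv.toLp 2 (Fin d → ℝ)).symm.measurable)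

lemma gaussianVec_zero_density (σ : ℝ) (hσ : 0 < σ) :
    gaussianVec (0 : EuclideanSpace ℝ (Fin d)) σ
      = (volume : Measure (EuclideanSpace ℝ (Fin d))).withDensity
          (fun z => ∏ i, gaussianPDF 0 ((σ ^ 2).toNNReal) (z i)) := by
  have hv : ((σ ^ 2).toNNReal) ≠ 0 := by
    simp only [ne_eq, Real.toNNReal_eq_zero, not_le]
    positivity
  rw [gaussianVec]
  have h0 : (fun i : Fin d => gaussianReal ((0 : EuclideanSpace ℝ (Fin d)) i) ((σ ^ 2).toNNReal))
      = fun _ => gaussianReal 0 ((σ ^ 2).toNNReal) := rfl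
  have hm2 : Measurable (fun x : Fin d → ℝ => ∏ i, gaussianPDF 0 ((σ ^ 2).toNNReal) (x i)) :=
    Finset.measurable_prod _ fun i _ =>
      (measurable_gaussianPDF 0 ((σ ^ 2).toNNReal)).comp (measurable_pi_apply i)
  rw [h0, pi_gaussian_eq d _ hv,
    map_withDensity_equiv (MeasurableEquiv.toLp 2 (Fin d → ℝ)) _ hm2,
    ← MeasureTheory.volume_pi,
    (show Measure.map (MeasurableEquiv.toLp 2 (Fin d → ℝ)) (volume : Measure (Fin d → ℝ)) = volume from
      (PiLp.volume_preserving_toLp (Fin d)).map_eq)]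
  rfl

lemma gaussianVec_map_repr (σ : ℝ) (hσ : 0 < σ)
    (b : OrthonormalBasis (Fin d) ℝ (EuclideanSpace ℝ (Fin d))) :
    (gaussianVec (0 : EuclideanSpace ℝ (Fin d)) σ).map b.repr
      = gaussianVec (0 : EuclideanSpace ℝ (Fin d)) σ := by
  rw [gaussianVec_zero_density σ hσ]
  have hco : (⇑b.repr : EuclideanSpace ℝ (Fin d) → EuclideanSpace ℝ (Fin d))
      = ⇑b.measurableEquiv := rfl
  rw [hco, map_withDensity_equiv b.measurableEquiv _ (measurable_prod_gaussianPDF _),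
    b.measurePreserving_measurableEquiv.map_eq]
  congr 1
  funext z
  rw [prod_gaussianPDF_norm, prod_gaussianPDF_norm]
  have hnorm : ‖b.measurableEquiv.symm z‖ = ‖z‖ := by
    have h : b.measurableEquiv.symm z = b.repr.symm z := rfl
    rw [h, b.repr.symm.norm_map]
  rw [hnorm]

lemma gaussianVec_eval (σ : ℝ) (i₀ : Fin d) (c : ℝ) :
    gaussianVec (0 : EuclideanSpace ℝ (Fin d)) σ {z | c ≤ z i₀}
      = gaussianReal 0 ((σ ^ 2).toNNReal) (Set.Ici c) := by
  have hm : Measurable fun z : EuclideanSpace ℝ (Fin d) => z i₀ :=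
    (measurable_pi_apply i₀).comp (MeasurableEquiv.toLp 2 (Fin d → ℝ)).symm.measurable
  have hmeas : MeasurableSet {z : EuclideanSpace ℝ (Fin d) | c ≤ z i₀} :=
    measurableSet_le measurable_const hm
  rw [gaussianVec, Measure.map_apply (MeasurableEquiv.measurable _) hmeas]
  have hset : ((MeasurableEquiv.toLp 2 (Fin d → ℝ)) ⁻¹' {z | c ≤ z i₀})
      = Set.pi Set.univ
          (Function.update (fun _ : Fin d => (Set.univ : Set ℝ)) i₀ (Set.Ici c)) := by
    ext w
    simp only [Set.mem_preimage, Set.mem_setOf_eq, Set.mem_pi, Set.mem_univ, forall_true_left]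
    constructor
    · intro h j
      rw [Function.update_apply]
      split_ifs with hj
      · subst hj; exact h
      · trivial
    · intro h
      have := h i₀
      rwa [Function.update_self] at this
  rw [hset, Measure.pi_pi]
  rw [Fintype.prod_eq_single i₀ (fun j hj => by
    rw [Function.update_of_ne hj]; exact measure_univ)]
  rw [Function.update_self]
  rfl

end Aux

/-- **Lemma A.2, second identity (Eq. (18)).** For the half-space
`A = {z : ⟨δ, z - x⟩ ≥ σ‖δ‖ Φ⁻¹(1 - p̄)}` and `ε ~ ν_{0,σ}`, one has
`ℙ(x + δ + ε ∈ A) = Φ(Φ⁻¹(p̄) + ‖δ‖/σ)`. -/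
theorem halfspace_prob_shifted {d : ℕ} (σ : ℝ) (hσ : 0 < σ)
    (x δ : EuclideanSpace ℝ (Fin d)) (hδ : δ ≠ 0)
    (pbar : ℝ) (hpbar : pbar ∈ Set.Ioo (0 : ℝ) 1)
    (A : Set (EuclideanSpace ℝ (Fin d)))
    (hA : A = {z | σ * ‖δ‖ * PhiInv (1 - pbar) ≤ (inner ℝ δ (z - x) : ℝ)}) :
    ((gaussianVec (0 : EuclideanSpace ℝ (Fin d)) σ) {ε | x + δ + ε ∈ A}).toReal
      = Phi (PhiInv pbar + ‖δ‖ / σ) := by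
  obtain ⟨hp0, hp1⟩ := hpbar
  have hd : 0 < d := by
    rcases Nat.eq_zero_or_pos d with h0 | h
    · exfalso; apply hδ; subst h0; exact Subsingleton.elim δ 0
    · exact h
  have hδn : (0:ℝ) < ‖δ‖ := norm_pos_iff.mpr hδ
  set q : ℝ := PhiInv (1 - pbar) with hq
  set i₀ : Fin d := ⟨0, hd⟩
  set u : EuclideanSpace ℝ (Fin d) := ‖δ‖⁻¹ • δ with hu_def
  have hu : ‖u‖ = 1 := by
    rw [hu_def, norm_smul, norm_inv, norm_norm, inv_mul_cancel₀ hδn.ne']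
  have horth : Orthonormal ℝ (Set.restrict {i₀} (fun _ : Fin d => u)) := by
    constructor
    · intro i; exact hu
    · intro i j hij
      exact absurd (Subtype.ext ((Set.mem_singleton_iff.mp i.2).trans
        (Set.mem_singleton_iff.mp j.2).symm)) hij
  have hcard : Module.finrank ℝ (EuclideanSpace ℝ (Fin d)) = Fintype.card (Fin d) := by
    simp [finrank_euclideanSpace_fin]
  obtain ⟨b, hb⟩ := horth.exists_orthonormalBasis_extension_of_card_eq hcard
  have hbi₀ : b i₀ = u := hb i₀ rfl
  set c : ℝ := σ * ‖δ‖ * q - ‖δ‖ ^ 2 with hc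
  have hrepr : ∀ ε : EuclideanSpace ℝ (Fin d), (inner ℝ δ ε : ℝ) = ‖δ‖ * (b.repr ε i₀) := by
    intro ε
    have h1 : b.repr ε i₀ = (inner ℝ (b i₀) ε : ℝ) := b.repr_apply_apply ε i₀
    rw [h1, hbi₀, hu_def, real_inner_smul_left]
    field_simp
  have hevent : {ε : EuclideanSpace ℝ (Fin d) | x + δ + ε ∈ A}
      = (⇑b.repr) ⁻¹' {z : EuclideanSpace ℝ (Fin d) | c / ‖δ‖ ≤ z i₀} := by
    ext ε
    rw [hA]
    simp only [Set.mem_setOf_eq, Set.mem_preimage]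
    have h1 : x + δ + ε - x = δ + ε := by abel
    rw [h1]
    have h2 : (inner ℝ δ (δ + ε) : ℝ) = ‖δ‖ ^ 2 + inner ℝ δ ε := by
      rw [inner_add_right, real_inner_self_eq_norm_sq]
    rw [h2, hrepr ε, div_le_iff₀ hδn]
    constructor <;> intro h <;> nlinarith
  have hm : Measurable fun z : EuclideanSpace ℝ (Fin d) => z i₀ :=
    (measurable_pi_apply i₀).comp (MeasurableEquiv.toLp 2 (Fin d → ℝ)).symm.measurable
  have hmeasset : MeasurableSet {z : EuclideanSpace ℝ (Fin d) | c / ‖δ‖ ≤ z i₀} :=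
    measurableSet_le measurable_const hm
  rw [hevent, ← Measure.map_apply b.repr.continuous.measurable hmeasset,
    gaussianVec_map_repr σ hσ b, gaussianVec_eval σ i₀ (c / ‖δ‖)]
  have hmap1 : gaussianReal 0 ((σ ^ 2).toNNReal) = (gaussianReal 0 1).map (fun y => σ * y) := by
    have h := gaussianReal_map_const_mul (μ := 0) (v := 1) σ
    have h2 : NNReal.mk (σ ^ 2) (sq_nonneg _) * 1 = (σ ^ 2).toNNReal := by
      ext
      simp [Real.coe_toNNReal _ (sq_nonneg σ)]
    rw [h2, mul_zero] at h
    exact h.symm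
  have hpre : (fun y => σ * y) ⁻¹' (Set.Ici (c / ‖δ‖)) = Set.Ici (c / ‖δ‖ / σ) := by
    ext y
    simp only [Set.mem_preimage, Set.mem_Ici, div_le_iff₀ hσ]
    rw [mul_comm]
  rw [hmap1, Measure.map_apply (measurable_const_mul σ) measurableSet_Ici, hpre, Phi_Ici]
  congr 1
  have hq' : q = -PhiInv pbar := PhiInv_one_sub ⟨hp0, hp1⟩
  rw [hc, hq']
  field_simp
  ring
end
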